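/- Let F = Z/qZ with q ≥ 2, θ = 1 − 1/q, and let n = m + k with m, k ≥ 0. Let r be an integer with 0 ≤ r ≤ θ·m, let B(r;m) ⊆ F^m be the Hamming ball of radius r centered at the zero word, and let C ⊆ B(r;m) × F^k be a code of size M in which any two distinct codewords have Hamming distance at least d. If (m/(nθ))·(θ − r/m)² > θ − d/n, then M ≤ (d/n) / ( (m/(nθ))·(θ − r/m)² − (θ − d/n) ). -/

import Mathlib

open Filter Real Set

set_option maxHeartbeats 1600000 in
/-- Key step in the proof of the hybrid Elias-Plotkin bound: a bound on the size of a
code contained in `B(r;m) × F^k` (with `F = ℤ/qℤ`, `n = m + k`, `θ = 1 - 1/q`). -/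
theorem stmt12 (q m k d r : ℕ) (hq : 2 ≤ q)
    (hr : (r : ℝ) ≤ (1 - 1 / (q : ℝ)) * m)
    (C : Finset (Fin (m + k) → ZMod q))
    (hball : ∀ c ∈ C, hammingNorm (fun i : Fin m => c (Fin.castAdd k i)) ≤ r)
    (hdist : ∀ c ∈ C, ∀ c' ∈ C, c ≠ c' → d ≤ hammingDist c c')
    (hpos : (1 - 1 / (q : ℝ)) - (d : ℝ) / ((m : ℝ) + k) <
      ((m : ℝ) / (((m : ℝ) + k) * (1 - 1 / (q : ℝ)))) *
        ((1 - 1 / (q : ℝ)) - (r : ℝ) / m) ^ 2) :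
    (C.card : ℝ) ≤ ((d : ℝ) / ((m : ℝ) + k)) /
      (((m : ℝ) / (((m : ℝ) + k) * (1 - 1 / (q : ℝ)))) *
          ((1 - 1 / (q : ℝ)) - (r : ℝ) / m) ^ 2 -
        ((1 - 1 / (q : ℝ)) - (d : ℝ) / ((m : ℝ) + k))) := by
  classical
  haveI : NeZero q := ⟨by omega⟩
  have hq1 : (1 : ℝ) < q := by exact_mod_cast hq
  set θ : ℝ := 1 - 1 / (q : ℝ) with hθ
  clear_value θ
  have hθpos : 0 < θ := by
    rw [hθ, sub_pos, div_lt_one (by linarith)]; linarith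
  -- n > 0
  have hn0 : 0 < m + k := by
    rcases Nat.eq_zero_or_pos (m + k) with h | h
    · exfalso
      obtain ⟨hm0, hk0⟩ := Nat.add_eq_zero.mp h
      subst hm0; subst hk0
      norm_num at hpos
      linarith
    · exact h
  have hNpos : (0 : ℝ) < (m : ℝ) + k := by exact_mod_cast hn0
  set Mc : ℝ := (C.card : ℝ) with hMc
  clear_value Mc
  -- counts
  set g : Fin (m + k) → ZMod q → ℕ := fun i a => (C.filter fun c => c i = a).card with hg
  have hB1 : ∀ i, ∑ a : ZMod q, (g i a : ℝ) = Mc := by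
    intro i
    rw [hMc, Finset.card_eq_sum_card_fiberwise (f := fun c => c i) (t := Finset.univ)
      (fun c _ => Finset.mem_univ _)]
    push_cast
    rfl
  have hsum_g : ∀ i, ∑ c ∈ C, (g i (c i) : ℝ) = ∑ a : ZMod q, (g i a : ℝ) ^ 2 := by
    intro i
    have key := (Finset.sum_fiberwise_of_maps_to (g := fun c : Fin (m + k) → ZMod q => c i)
      (t := (Finset.univ : Finset (ZMod q))) (fun c (_ : c ∈ C) => Finset.mem_univ (c i))
      (fun c => (g i (c i) : ℝ)))
    rw [← key]
    refine Finset.sum_congr rfl fun a _ => ?_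
    have h1 : ∀ c ∈ C.filter fun c => c i = a, (g i (c i) : ℝ) = (g i a : ℝ) := by
      intro c hc
      rw [(Finset.mem_filter.mp hc).2]
    rw [Finset.sum_congr rfl h1, Finset.sum_const, nsmul_eq_mul, sq]
  -- per-coordinate count of unequal pairs
  have hWi : ∀ i, ∑ c ∈ C, ∑ c' ∈ C, (if c i ≠ c' i then (1 : ℝ) else 0)
      = Mc ^ 2 - ∑ a : ZMod q, (g i a : ℝ) ^ 2 := by
    intro i
    have inner : ∀ c ∈ C, ∑ c' ∈ C, (if c i ≠ c' i then (1 : ℝ) else 0)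
        = Mc - (g i (c i) : ℝ) := by
      intro c _
      have h2 : ∀ c' ∈ C, (if c i ≠ c' i then (1 : ℝ) else 0)
          = 1 - (if c' i = c i then (1 : ℝ) else 0) := by
        intro c' _
        rcases eq_or_ne (c i) (c' i) with h | h
        · simp [h]
        · simp [h, Ne.symm h]
      rw [Finset.sum_congr rfl h2, Finset.sum_sub_distrib, Finset.sum_const, nsmul_eq_mul,
        mul_one, Finset.sum_boole, hMc]
    rw [Finset.sum_congr rfl inner, Finset.sum_sub_distrib, Finset.sum_const, nsmul_eq_mul,
      hsum_g i, hMc, sq]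
  -- lower bound on the double sum
  have hA : Mc * (Mc - 1) * d ≤ ∑ c ∈ C, ∑ c' ∈ C, (hammingDist c c' : ℝ) := by
    have h1 : ∀ c ∈ C, (Mc - 1) * d ≤ ∑ c' ∈ C, (hammingDist c c' : ℝ) := by
      intro c hc
      have hcard1 : 1 ≤ C.card := Finset.card_pos.mpr ⟨c, hc⟩
      calc (Mc - 1) * d = ∑ _c' ∈ C.erase c, (d : ℝ) := by
            rw [Finset.sum_const, Finset.card_erase_of_mem hc, nsmul_eq_mul, hMc]
            push_cast [hcard1]
            ring
        _ ≤ ∑ c' ∈ C.erase c, (hammingDist c c' : ℝ) := by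
            refine Finset.sum_le_sum fun c' hc' => ?_
            exact_mod_cast hdist c hc c' (Finset.mem_of_mem_erase hc')
              (Ne.symm (Finset.ne_of_mem_erase hc'))
        _ ≤ ∑ c' ∈ C, (hammingDist c c' : ℝ) := by
            refine Finset.sum_le_sum_of_subset_of_nonneg (Finset.erase_subset _ _)
              fun _ _ _ => by positivity
    calc Mc * (Mc - 1) * d = ∑ _c ∈ C, (Mc - 1) * d := by
          rw [Finset.sum_const, nsmul_eq_mul, hMc]; ring
      _ ≤ _ := Finset.sum_le_sum h1
  -- rewrite double sum coordinatewise
  have hB : ∑ c ∈ C, ∑ c' ∈ C, (hammingDist c c' : ℝ)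
      = ∑ i : Fin (m + k), (Mc ^ 2 - ∑ a : ZMod q, (g i a : ℝ) ^ 2) := by
    have hd1 : ∀ c c' : Fin (m + k) → ZMod q,
        (hammingDist c c' : ℝ) = ∑ i : Fin (m + k), (if c i ≠ c' i then (1 : ℝ) else 0) := by
      intro c c'
      rw [hammingDist, Finset.card_filter]
      push_cast
      exact Finset.sum_congr rfl fun i _ => by by_cases h : c i = c' i <;> simp [h]
    calc ∑ c ∈ C, ∑ c' ∈ C, (hammingDist c c' : ℝ)
        = ∑ c ∈ C, ∑ i : Fin (m + k), ∑ c' ∈ C, (if c i ≠ c' i then (1 : ℝ) else 0) := by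
          refine Finset.sum_congr rfl fun c _ => ?_
          rw [← Finset.sum_comm]
          exact Finset.sum_congr rfl fun c' _ => hd1 c c'
      _ = ∑ i : Fin (m + k), ∑ c ∈ C, ∑ c' ∈ C, (if c i ≠ c' i then (1 : ℝ) else 0) :=
          Finset.sum_comm
      _ = _ := Finset.sum_congr rfl fun i _ => hWi i
  -- k-part per coordinate
  have hkpart : ∀ i : Fin (m + k), Mc ^ 2 - ∑ a : ZMod q, (g i a : ℝ) ^ 2 ≤ θ * Mc ^ 2 := by
    intro i
    have hcs : Mc ^ 2 ≤ (q : ℝ) * ∑ a : ZMod q, (g i a : ℝ) ^ 2 := by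
      have h0 := sq_sum_le_card_mul_sum_sq (s := (Finset.univ : Finset (ZMod q)))
        (f := fun a => (g i a : ℝ))
      rw [hB1 i] at h0
      simpa [Finset.card_univ, ZMod.card] using h0
    have hq0 : (0 : ℝ) < q := by linarith
    have hid : θ * Mc ^ 2 = Mc ^ 2 - Mc ^ 2 / q := by rw [hθ]; ring
    have h2 : Mc ^ 2 / q ≤ ∑ a : ZMod q, (g i a : ℝ) ^ 2 := by
      rw [div_le_iff₀ hq0]; linarith
    linarith
  -- nonzero counts on the first m coordinates
  set t : Fin m → ℕ := fun j => (C.filter fun c => c (Fin.castAdd k j) ≠ 0).card with ht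
  clear_value t
  have hq1' : (0 : ℝ) < (q : ℝ) - 1 := by linarith
  have hmpart : ∀ j : Fin m,
      Mc ^ 2 - ∑ a : ZMod q, (g (Fin.castAdd k j) a : ℝ) ^ 2
        ≤ 2 * Mc * (t j : ℝ) - (1 / θ) * (t j : ℝ) ^ 2 := by
    intro j
    set i := Fin.castAdd k j with hi
    have hsplit : (g i 0 : ℝ) ^ 2 + ∑ a ∈ Finset.univ.erase (0 : ZMod q), (g i a : ℝ) ^ 2
        = ∑ a : ZMod q, (g i a : ℝ) ^ 2 :=
      Finset.add_sum_erase (Finset.univ : Finset (ZMod q)) (fun a => (g i a : ℝ) ^ 2)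
        (Finset.mem_univ (0 : ZMod q))
    have hgt : g i 0 + t j = C.card := by
      simp only [hg, ht]
      simpa using Finset.card_filter_add_card_filter_not (s := C)
        (p := fun c => c i = 0)
    have hMt : (g i 0 : ℝ) + (t j : ℝ) = Mc := by
      rw [hMc]; exact_mod_cast congrArg (Nat.cast : ℕ → ℝ) hgt
    have hsum1 : (g i 0 : ℝ) + ∑ a ∈ Finset.univ.erase (0 : ZMod q), (g i a : ℝ)
        = ∑ a : ZMod q, (g i a : ℝ) :=
      Finset.add_sum_erase (Finset.univ : Finset (ZMod q)) (fun a => (g i a : ℝ))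
        (Finset.mem_univ (0 : ZMod q))
    have hts : ∑ a ∈ Finset.univ.erase (0 : ZMod q), (g i a : ℝ) = (t j : ℝ) := by
      have := hB1 i
      linarith
    have hcauchy : (t j : ℝ) ^ 2
        ≤ ((q : ℝ) - 1) * ∑ a ∈ Finset.univ.erase (0 : ZMod q), (g i a : ℝ) ^ 2 := by
      have h0 := sq_sum_le_card_mul_sum_sq (s := Finset.univ.erase (0 : ZMod q))
        (f := fun a => (g i a : ℝ))
      rw [hts] at h0
      have hcard : (Finset.univ.erase (0 : ZMod q)).card = q - 1 := by
        rw [Finset.card_erase_of_mem (Finset.mem_univ _), Finset.card_univ, ZMod.card]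
      rw [hcard, Nat.cast_sub (by omega : 1 ≤ q)] at h0
      simpa using h0
    have hT' : (1 / θ) * (t j : ℝ) ^ 2
        ≤ (t j : ℝ) ^ 2 + ∑ a ∈ Finset.univ.erase (0 : ZMod q), (g i a : ℝ) ^ 2 := by
      have hTle : (t j : ℝ) ^ 2 / ((q : ℝ) - 1)
          ≤ ∑ a ∈ Finset.univ.erase (0 : ZMod q), (g i a : ℝ) ^ 2 := by
        rw [div_le_iff₀ hq1']; linarith
      have hid : (1 / θ) * (t j : ℝ) ^ 2 = (t j : ℝ) ^ 2 + (t j : ℝ) ^ 2 / ((q : ℝ) - 1) := by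
        rw [hθ]
        have hqne : (q : ℝ) ≠ 0 := by linarith
        field_simp
        ring
      linarith
    have hg0 : (g i 0 : ℝ) = Mc - (t j : ℝ) := by linarith
    have hg0sq : (g i 0 : ℝ) ^ 2 = (Mc - (t j : ℝ)) ^ 2 := by rw [hg0]
    nlinarith [hT', hsplit, hg0sq]
  -- sums over the first m coordinates
  set S : ℝ := ∑ j : Fin m, (t j : ℝ) with hS
  clear_value S
  set T2 : ℝ := ∑ j : Fin m, (t j : ℝ) ^ 2 with hT2
  clear_value T2
  have hmsum : ∑ j : Fin m, (Mc ^ 2 - ∑ a : ZMod q, (g (Fin.castAdd k j) a : ℝ) ^ 2)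
      ≤ 2 * Mc * S - (1 / θ) * T2 := by
    calc ∑ j : Fin m, (Mc ^ 2 - ∑ a : ZMod q, (g (Fin.castAdd k j) a : ℝ) ^ 2)
        ≤ ∑ j : Fin m, (2 * Mc * (t j : ℝ) - (1 / θ) * (t j : ℝ) ^ 2) :=
          Finset.sum_le_sum fun j _ => hmpart j
      _ = 2 * Mc * S - (1 / θ) * T2 := by
          rw [hS, hT2, Finset.sum_sub_distrib, ← Finset.mul_sum, ← Finset.mul_sum]
  have hksum : ∑ j : Fin k, (Mc ^ 2 - ∑ a : ZMod q, (g (Fin.natAdd m j) a : ℝ) ^ 2)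
      ≤ (k : ℝ) * (θ * Mc ^ 2) := by
    calc ∑ j : Fin k, (Mc ^ 2 - ∑ a : ZMod q, (g (Fin.natAdd m j) a : ℝ) ^ 2)
        ≤ ∑ _j : Fin k, θ * Mc ^ 2 := Finset.sum_le_sum fun j _ => hkpart _
      _ = (k : ℝ) * (θ * Mc ^ 2) := by
          rw [Finset.sum_const, nsmul_eq_mul]
          simp
  have hmaster : Mc * (Mc - 1) * d ≤ 2 * Mc * S - (1 / θ) * T2 + (k : ℝ) * (θ * Mc ^ 2) := by
    rw [hB, Fin.sum_univ_add] at hA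
    linarith
  -- weight bound
  have hS_le : S ≤ Mc * r := by
    have hnat : ∑ j : Fin m, t j ≤ C.card * r := by
      have hswap : ∑ j : Fin m, t j
          = ∑ c ∈ C, hammingNorm (fun j : Fin m => c (Fin.castAdd k j)) := by
        simp only [ht, Finset.card_filter]
        rw [Finset.sum_comm]
        refine Finset.sum_congr rfl fun c _ => ?_
        rw [hammingNorm, Finset.card_filter]
      rw [hswap]
      calc ∑ c ∈ C, hammingNorm (fun j : Fin m => c (Fin.castAdd k j))
          ≤ ∑ _c ∈ C, r := Finset.sum_le_sum fun c hc => hball c hc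
        _ = C.card * r := by rw [Finset.sum_const, smul_eq_mul]
    have : S = ((∑ j : Fin m, t j : ℕ) : ℝ) := by rw [hS]; push_cast; rfl
    rw [this, hMc]
    exact_mod_cast hnat
  have hS2 : S ^ 2 ≤ (m : ℝ) * T2 := by
    have h0 := sq_sum_le_card_mul_sum_sq (s := (Finset.univ : Finset (Fin m)))
      (f := fun j => (t j : ℝ))
    rw [hS, hT2]
    simpa [Finset.card_univ] using h0
  have hSnn : 0 ≤ S := by
    rw [hS]; exact Finset.sum_nonneg fun j _ => by positivity
  have hMcnn : (0 : ℝ) ≤ Mc := by rw [hMc]; positivity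
  have hθne : θ ≠ 0 := ne_of_gt hθpos
  have hNne : ((m : ℝ) + k) ≠ 0 := ne_of_gt hNpos
  -- unified quadratic bound
  have hmaster2 : Mc * (Mc - 1) * d
      ≤ Mc ^ 2 * (θ * k + 2 * r - (r : ℝ) ^ 2 / (θ * m)) := by
    rcases Nat.eq_zero_or_pos m with hm | hm
    · have hr0 : (r : ℝ) = 0 := by
        have h1 : (r : ℝ) ≤ 0 := by rw [hm] at hr; simpa using hr
        have h2 : (0 : ℝ) ≤ r := Nat.cast_nonneg r
        linarith
      have hS0 : S = 0 := by
        rw [hS]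
        exact Finset.sum_eq_zero fun j _ => absurd j.isLt (by omega)
      have hT20 : T2 = 0 := by
        rw [hT2]
        exact Finset.sum_eq_zero fun j _ => absurd j.isLt (by omega)
      have hmz : (m : ℝ) = 0 := by rw [hm]; norm_num
      have hE0 : Mc ^ 2 * (θ * k + 2 * r - (r : ℝ) ^ 2 / (θ * m)) = (k : ℝ) * (θ * Mc ^ 2) := by
        rw [hr0, hmz]
        norm_num
        ring
      rw [hE0]
      rw [hS0, hT20] at hmaster
      linarith
    · have hm' : (0 : ℝ) < m := by exact_mod_cast hm
      have hθm : (0 : ℝ) < θ * m := by positivity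
      have hu : (0 : ℝ) ≤ Mc * r - S := by linarith
      have hub : S + Mc * (r : ℝ) ≤ 2 * (θ * m) * Mc := by
        have h1 : Mc * (r : ℝ) ≤ Mc * (θ * m) := mul_le_mul_of_nonneg_left hr hMcnn
        linarith
      have hkey := mul_nonneg hu (by linarith : (0 : ℝ) ≤ 2 * (θ * m) * Mc - (S + Mc * r))
      have hstep : θ * m * (2 * Mc * S) - (m : ℝ) * T2
          ≤ θ * m * (2 * Mc ^ 2 * r) - Mc ^ 2 * (r : ℝ) ^ 2 := by
        nlinarith [hS2, hkey]
      have h2 : 2 * Mc * S - (1 / θ) * T2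
          ≤ 2 * Mc ^ 2 * r - Mc ^ 2 * (r : ℝ) ^ 2 / (θ * m) := by
        have e1 : (2 * Mc * S - (1 / θ) * T2) * (θ * m) = θ * m * (2 * Mc * S) - (m : ℝ) * T2 := by
          field_simp
        have e2 : (2 * Mc ^ 2 * (r : ℝ) - Mc ^ 2 * (r : ℝ) ^ 2 / (θ * m)) * (θ * m)
            = θ * m * (2 * Mc ^ 2 * r) - Mc ^ 2 * (r : ℝ) ^ 2 := by
          field_simp
        refine le_of_mul_le_mul_right ?_ hθm
        rw [e1, e2]
        exact hstep
      have hE : Mc ^ 2 * (θ * k + 2 * r - (r : ℝ) ^ 2 / (θ * m))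
          = 2 * Mc ^ 2 * r - Mc ^ 2 * (r : ℝ) ^ 2 / (θ * m) + (k : ℝ) * (θ * Mc ^ 2) := by
        ring
      linarith
  -- key identity for the denominator
  have hDN : (((m : ℝ) / (((m : ℝ) + k) * θ)) * (θ - (r : ℝ) / m) ^ 2
        - (θ - (d : ℝ) / ((m : ℝ) + k))) * ((m : ℝ) + k)
      = (d : ℝ) - (θ * k + 2 * r - (r : ℝ) ^ 2 / (θ * m)) := by
    rcases Nat.eq_zero_or_pos m with hm | hm
    · have hr0 : (r : ℝ) = 0 := by
        have h1 : (r : ℝ) ≤ 0 := by rw [hm] at hr; simpa using hr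
        have h2 : (0 : ℝ) ≤ r := Nat.cast_nonneg r
        linarith
      have hmz : (m : ℝ) = 0 := by rw [hm]; norm_num
      have hk' : (k : ℝ) ≠ 0 := by
        have : 0 < k := by omega
        positivity
      rw [hr0, hmz]
      norm_num
      field_simp
    · have hm' : ((m : ℝ)) ≠ 0 := by positivity
      field_simp
      ring
  -- conclusion
  rcases Nat.eq_zero_or_pos C.card with hC0 | hC1
  · have hMc0 : Mc = 0 := by rw [hMc, hC0]; norm_num
    rw [hMc0]
    apply div_nonneg (div_nonneg (Nat.cast_nonneg d) (le_of_lt hNpos))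
    exact le_of_lt (sub_pos.mpr hpos)
  · have hMc1 : (1 : ℝ) ≤ Mc := by rw [hMc]; exact_mod_cast hC1
    have hDpos : (0 : ℝ) < ((m : ℝ) / (((m : ℝ) + k) * θ)) * (θ - (r : ℝ) / m) ^ 2
        - (θ - (d : ℝ) / ((m : ℝ) + k)) := sub_pos.mpr hpos
    rw [le_div_iff₀ hDpos, le_div_iff₀ hNpos]
    calc Mc * (((m : ℝ) / (((m : ℝ) + k) * θ)) * (θ - (r : ℝ) / m) ^ 2
          - (θ - (d : ℝ) / ((m : ℝ) + k))) * ((m : ℝ) + k)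
        = Mc * ((((m : ℝ) / (((m : ℝ) + k) * θ)) * (θ - (r : ℝ) / m) ^ 2
          - (θ - (d : ℝ) / ((m : ℝ) + k))) * ((m : ℝ) + k)) := by ring
      _ = Mc * ((d : ℝ) - (θ * k + 2 * r - (r : ℝ) ^ 2 / (θ * m))) := by rw [hDN]
      _ ≤ d := by nlinarith [hmaster2, hMc1, Nat.cast_nonneg (α := ℝ) d]
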